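/- arXiv:2402.04190 — 3 statements merged into one kernel-verified Lean document; each statement's English description precedes it below -/
import Mathlib

section
/- The function F defined on the open interval (0,1) by F(a) = (a / √(1 − a²)) · artanh(√(1 − a²)), where artanh denotes the inverse hyperbolic tangent, is strictly increasing on (0,1). -/
/-- The inverse hyperbolic tangent. -/
noncomputable def artanh (x : ℝ) : ℝ := (1 / 2) * Real.log ((1 + x) / (1 - x))

/-- `F(a) = (a / √(1 - a²)) · artanh (√(1 - a²))`. -/
noncomputable def F (a : ℝ) : ℝ :=
  (a / Real.sqrt (1 - a ^ 2)) * artanh (Real.sqrt (1 - a ^ 2))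

lemma aux_sinh_lt (x : ℝ) (hx : 0 < x) : Real.sinh x < x * Real.cosh x := by
  have key : StrictMonoOn (fun y : ℝ => y * Real.cosh y - Real.sinh y) (Set.Ici 0) := by
    refine strictMonoOn_of_deriv_pos (convex_Ici 0) (((continuous_id.mul Real.continuous_cosh).sub Real.continuous_sinh).continuousOn) ?_
    intro y hy
    rw [interior_Ici, Set.mem_Ioi] at hy
    have h1 : HasDerivAt (fun y : ℝ => y * Real.cosh y - Real.sinh y)
        (1 * Real.cosh y + y * Real.sinh y - Real.cosh y) y :=
      ((hasDerivAt_id y).mul (Real.hasDerivAt_cosh y)).sub (Real.hasDerivAt_sinh y)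
    rw [h1.deriv]
    have := Real.sinh_pos_iff.2 hy
    nlinarith
  have := key (Set.self_mem_Ici) (Set.mem_Ici.2 hx.le) hx
  simpa using this

lemma aux_anti : StrictAntiOn (fun x : ℝ => x / Real.sinh x) (Set.Ioi 0) := by
  refine strictAntiOn_of_deriv_neg (convex_Ioi 0) ?_ ?_
  · exact ContinuousOn.div continuousOn_id Real.continuous_sinh.continuousOn
      (fun x hx => (Real.sinh_pos_iff.2 hx).ne')
  · intro x hx
    rw [interior_Ioi, Set.mem_Ioi] at hx
    have hs := Real.sinh_pos_iff.2 hx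
    have h1 : HasDerivAt (fun x : ℝ => x / Real.sinh x)
        ((1 * Real.sinh x - x * Real.cosh x) / (Real.sinh x) ^ 2) x :=
      (hasDerivAt_id x).div (Real.hasDerivAt_sinh x) hs.ne'
    rw [h1.deriv]
    have := aux_sinh_lt x hx
    have : 1 * Real.sinh x - x * Real.cosh x < 0 := by nlinarith
    exact div_neg_of_neg_of_pos this (by positivity)

/-- For `a ∈ (0,1)`, `F a = u / sinh u` with `u = log ((1 + √(1-a²))/a)`. -/
lemma F_eq (a : ℝ) (ha : a ∈ Set.Ioo (0 : ℝ) 1) :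
    F a = Real.log ((1 + Real.sqrt (1 - a ^ 2)) / a) /
      Real.sinh (Real.log ((1 + Real.sqrt (1 - a ^ 2)) / a)) := by
  obtain ⟨ha0, ha1⟩ := ha
  set e := Real.sqrt (1 - a ^ 2) with he
  have h1a : 0 < 1 - a ^ 2 := by nlinarith
  have he0 : 0 < e := Real.sqrt_pos.2 h1a
  have he2 : e ^ 2 = 1 - a ^ 2 := Real.sq_sqrt h1a.le
  have he1 : e < 1 := by nlinarith [Real.sq_sqrt h1a.le]
  have hq : 0 < (1 + e) / a := by positivity
  set u := Real.log ((1 + e) / a) with hu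
  -- artanh e = u
  have hart : artanh e = u := by
    have h2 : (1 + e) / (1 - e) = ((1 + e) / a) ^ 2 := by
      rw [div_pow]
      rw [div_eq_div_iff (by linarith) (by positivity)]
      ring_nf
      nlinarith
    rw [artanh, h2, Real.log_pow]
    push_cast
    ring
  -- sinh u = e / a
  have hsinh : Real.sinh u = e / a := by
    rw [Real.sinh_eq, hu, Real.exp_log hq, ← Real.log_inv, Real.exp_log (by positivity)]
    rw [div_eq_div_iff (by norm_num) (by positivity)]
    field_simp
    nlinarith
  rw [F, ← he, hart, hsinh]
  field_simp

/-- `F` is strictly increasing on the open interval `(0,1)`. -/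
theorem F_strictMonoOn : StrictMonoOn F (Set.Ioo (0 : ℝ) 1) := by
  intro a ha b hb hab
  rw [F_eq a ha, F_eq b hb]
  obtain ⟨ha0, ha1⟩ := ha
  obtain ⟨hb0, hb1⟩ := hb
  have h1a : 0 < 1 - a ^ 2 := by nlinarith
  have h1b : 0 < 1 - b ^ 2 := by nlinarith
  have hea : 0 < Real.sqrt (1 - a ^ 2) := Real.sqrt_pos.2 h1a
  have heb : 0 < Real.sqrt (1 - b ^ 2) := Real.sqrt_pos.2 h1b
  have heab : Real.sqrt (1 - b ^ 2) < Real.sqrt (1 - a ^ 2) :=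
    Real.sqrt_lt_sqrt h1b.le (by nlinarith)
  have hlt : (1 + Real.sqrt (1 - b ^ 2)) / b < (1 + Real.sqrt (1 - a ^ 2)) / a := by
    rw [div_lt_div_iff₀ hb0 ha0]
    nlinarith
  have hb1' : 1 < (1 + Real.sqrt (1 - b ^ 2)) / b := by
    rw [lt_div_iff₀ hb0]; linarith
  have hub : 0 < Real.log ((1 + Real.sqrt (1 - b ^ 2)) / b) := Real.log_pos hb1'
  have hua : Real.log ((1 + Real.sqrt (1 - b ^ 2)) / b) <
      Real.log ((1 + Real.sqrt (1 - a ^ 2)) / a) :=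
    Real.log_lt_log (by positivity) hlt
  exact aux_anti (Set.mem_Ioi.2 hub) (Set.mem_Ioi.2 (hub.trans hua)) hua
end

section
/- For a ∈ (0,1) let e(a) = √(1 − a²) and let σ(a) = √( e(a) / ( e(a) + a·artanh(e(a)) ) ), where artanh denotes the inverse hyperbolic tangent. Then σ is strictly decreasing on the open interval (0,1): for all 0 < a < a' < 1 one has σ(a') < σ(a). -/
/-- `e a = √(1 - a²)`, the eccentricity of the oblate spheroid with semi-axes `(a,1,1)`. -/
noncomputable def ecc (a : ℝ) : ℝ := Real.sqrt (1 - a ^ 2)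

/-- The softness `σ(a) = √( e/(e + a·artanh e) )` of the oblate spheroid with
semi-axes `(a,1,1)`, where `e = √(1 - a²)`. -/
noncomputable def softness (a : ℝ) : ℝ :=
  Real.sqrt (ecc a / (ecc a + a * artanh (ecc a)))

lemma hasDerivAt_artanh {x : ℝ} (h1 : -1 < x) (h2 : x < 1) :
    HasDerivAt artanh (1 / (1 - x ^ 2)) x := by
  have hx1 : (0:ℝ) < 1 + x := by linarith
  have hx2 : (0:ℝ) < 1 - x := by linarith
  have ha : HasDerivAt (fun y : ℝ => 1 + y) 1 x := by
    simpa using (hasDerivAt_id x).const_add (1:ℝ)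
  have hb : HasDerivAt (fun y : ℝ => 1 - y) (-1) x := by
    simpa using (hasDerivAt_id x).const_sub (1:ℝ)
  have hg : HasDerivAt (fun y => (1/2) * (Real.log (1 + y) - Real.log (1 - y)))
      ((1/2) * (1/(1+x) - (-1)/(1-x))) x :=
    ((ha.log hx1.ne').sub (hb.log hx2.ne')).const_mul _
  have heq : (fun y => (1/2) * (Real.log (1 + y) - Real.log (1 - y))) =ᶠ[nhds x] artanh := by
    filter_upwards [Ioo_mem_nhds h1 h2] with y hy
    have : (1:ℝ) + y ≠ 0 := by have := hy.1; intro h; linarith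
    have : Real.log ((1+y)/(1-y)) = Real.log (1+y) - Real.log (1-y) :=
      Real.log_div (by have := hy.1; intro h; linarith) (by have := hy.2; intro h; linarith)
    simp [artanh, this]
  have := hg.congr_of_eventuallyEq heq.symm
  refine this.congr_deriv ?_
  have h12 : (1:ℝ) - x ^ 2 ≠ 0 := by nlinarith
  field_simp
  ring

lemma artanh_zero : artanh 0 = 0 := by simp [artanh]

lemma self_lt_artanh {x : ℝ} (h1 : 0 < x) (h2 : x < 1) : x < artanh x := by
  have key : StrictMonoOn (fun y => artanh y - y) (Set.Ico (0:ℝ) 1) := by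
    apply strictMonoOn_of_deriv_pos (convex_Ico 0 1)
    · intro y hy
      exact ((hasDerivAt_artanh (by linarith [hy.1]) hy.2).sub (hasDerivAt_id y)).continuousAt.continuousWithinAt
    · intro y hy
      rw [interior_Ico] at hy
      have hd : HasDerivAt (fun y => artanh y - y) (1 / (1 - y ^ 2) - 1) y := by
        exact (hasDerivAt_artanh (by linarith [hy.1]) hy.2).sub (hasDerivAt_id' y)
      rw [hd.deriv]
      have : y ^ 2 < 1 := by nlinarith [hy.1, hy.2]
      have h0 : 0 < 1 - y ^ 2 := by linarith
      have : 1 < 1 / (1 - y ^ 2) := by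
        rw [lt_div_iff₀ h0]; nlinarith [hy.1]
      linarith
  have := key (Set.mem_Ico.mpr ⟨le_refl 0, one_pos⟩) (Set.mem_Ico.mpr ⟨h1.le, h2⟩) h1
  simp [artanh_zero] at this
  linarith

noncomputable def hfun (x : ℝ) : ℝ := Real.sqrt (1 - x ^ 2) * artanh x / x

lemma hasDerivAt_hfun {x : ℝ} (h1 : 0 < x) (h2 : x < 1) :
    HasDerivAt hfun ((x - artanh x) / (Real.sqrt (1 - x ^ 2) * x ^ 2)) x := by
  have hx2 : 0 < 1 - x ^ 2 := by nlinarith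
  have hs : 0 < Real.sqrt (1 - x ^ 2) := Real.sqrt_pos.mpr hx2
  have hsq : Real.sqrt (1 - x ^ 2) ^ 2 = 1 - x ^ 2 := Real.sq_sqrt hx2.le
  have hinner : HasDerivAt (fun y : ℝ => 1 - y ^ 2) (-(2 * x)) x := by
    simpa using ((hasDerivAt_pow 2 x).const_sub 1)
  have hsqrt : HasDerivAt (fun y => Real.sqrt (1 - y ^ 2))
      (1 / (2 * Real.sqrt (1 - x ^ 2)) * (-(2 * x))) x :=
    (Real.hasDerivAt_sqrt hx2.ne').comp x hinner
  have hu := hasDerivAt_artanh (by linarith) h2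
  have hnum := hsqrt.mul hu
  have hden : HasDerivAt (fun y : ℝ => y) 1 x := hasDerivAt_id x
  have hdiv := hnum.div hden h1.ne'
  refine (hdiv.congr_deriv ?_).congr_of_eventuallyEq (Filter.Eventually.of_forall fun y => rfl)
  set s := Real.sqrt (1 - x ^ 2) with hsdef
  rw [show (1:ℝ) - x ^ 2 = s ^ 2 from hsq.symm]
  simp only [Pi.mul_apply, ← hsdef]
  field_simp
  linear_combination (-artanh x) * hsq

lemma hfun_strictAntiOn : StrictAntiOn hfun (Set.Ioo (0:ℝ) 1) := by
  apply strictAntiOn_of_deriv_neg (convex_Ioo 0 1)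
  · intro y hy
    exact (hasDerivAt_hfun hy.1 hy.2).continuousAt.continuousWithinAt
  · intro y hy
    rw [interior_Ioo] at hy
    rw [(hasDerivAt_hfun hy.1 hy.2).deriv]
    apply div_neg_of_neg_of_pos
    · linarith [self_lt_artanh hy.1 hy.2]
    · have : (0:ℝ) < 1 - y ^ 2 := by nlinarith [hy.1, hy.2]
      exact mul_pos (Real.sqrt_pos.mpr this) (pow_pos hy.1 2)

lemma ecc_mem {a : ℝ} (h1 : 0 < a) (h2 : a < 1) : ecc a ∈ Set.Ioo (0:ℝ) 1 := by
  constructor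
  · exact Real.sqrt_pos.mpr (by nlinarith)
  · rw [show (1:ℝ) = Real.sqrt 1 by simp]
    exact Real.sqrt_lt_sqrt (by nlinarith) (by nlinarith)

lemma hfun_ecc {a : ℝ} (h1 : 0 < a) (h2 : a < 1) :
    hfun (ecc a) = a * artanh (ecc a) / ecc a := by
  have hsq : ecc a ^ 2 = 1 - a ^ 2 := Real.sq_sqrt (by nlinarith)
  have : (1:ℝ) - ecc a ^ 2 = a ^ 2 := by rw [hsq]; ring
  rw [hfun, this, Real.sqrt_sq h1.le]

lemma softness_eq {a : ℝ} (h1 : 0 < a) (h2 : a < 1) :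
    softness a = Real.sqrt (1 / (1 + hfun (ecc a))) := by
  have he := ecc_mem h1 h2
  have ht : 0 < artanh (ecc a) := lt_trans he.1 (self_lt_artanh he.1 he.2)
  rw [softness, hfun_ecc h1 h2]
  congr 1
  have hd1 : 0 < ecc a + a * artanh (ecc a) := add_pos he.1 (mul_pos h1 ht)
  have hd2 : 0 < 1 + a * artanh (ecc a) / ecc a := by
    have := div_pos (mul_pos h1 ht) he.1
    linarith
  rw [div_eq_div_iff hd1.ne' hd2.ne']
  field_simp [he.1.ne']

/-- the softness σ is strictly decreasing on (0,1):
for all 0 < a < a' < 1 one has σ(a') < σ(a). -/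
theorem softness_strictAntiOn : StrictAntiOn softness (Set.Ioo (0 : ℝ) 1) := by
  intro a ha a' ha' hlt
  rw [softness_eq ha.1 ha.2, softness_eq ha'.1 ha'.2]
  have he := ecc_mem ha.1 ha.2
  have he' := ecc_mem ha'.1 ha'.2
  have hecclt : ecc a' < ecc a := Real.sqrt_lt_sqrt (by nlinarith [ha'.1, ha'.2]) (by nlinarith [ha.1])
  have hh : hfun (ecc a) < hfun (ecc a') := hfun_strictAntiOn he' he hecclt
  have hp : 0 < 1 + hfun (ecc a) := by
    rw [hfun_ecc ha.1 ha.2]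
    have ht : 0 < artanh (ecc a) := lt_trans he.1 (self_lt_artanh he.1 he.2)
    have := div_pos (mul_pos ha.1 ht) he.1
    linarith
  apply Real.sqrt_lt_sqrt (one_div_nonneg.mpr (by linarith))
  apply one_div_lt_one_div_of_lt hp
  linarith
end

section
/- For a ∈ (0,1) let e(a) = √(1 − a²) and let σ(a) = √( e(a) / ( e(a) + a·artanh(e(a)) ) ), where artanh denotes the inverse hyperbolic tangent. Then for every a ∈ (0,1) one has 1/√2 < σ(a) < 1; that is, the softness of every oblate spheroid in the family with semi-axes (a,1,1), 0 < a < 1, lies strictly between the softness 1/√2 of the sphere and the softness 1 of the two-sided circular disc. -/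
lemma artanh_pos {e : ℝ} (he0 : 0 < e) (he1 : e < 1) : 0 < artanh e := by
  have : (1 : ℝ) < (1 + e) / (1 - e) := by
    rw [lt_div_iff₀ (by linarith)]; linarith
  have := Real.log_pos this
  unfold artanh; linarith

/-- key inequality: `√(1-e²) · artanh e < e` for `e ∈ (0,1)`. -/
lemma key {e : ℝ} (he0 : 0 < e) (he1 : e < 1) :
    Real.sqrt (1 - e ^ 2) * artanh e < e := by
  set x : ℝ := (1 + e) / (1 - e) with hxdef
  have hx1 : (1 : ℝ) < x := by rw [hxdef, lt_div_iff₀ (by linarith)]; linarith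
  have hx0 : (0 : ℝ) < x := by linarith
  have hexp : Real.exp ((1 / 2) * Real.log x) = Real.sqrt x := by
    rw [Real.sqrt_eq_rpow, Real.rpow_def_of_pos hx0]; ring_nf
  have hsinh : Real.sinh ((1 / 2) * Real.log x) = (Real.sqrt x - 1 / Real.sqrt x) / 2 := by
    rw [Real.sinh_eq, Real.exp_neg, hexp]; ring
  have ht : artanh e = (1 / 2) * Real.log x := rfl
  have htpos : 0 < artanh e := artanh_pos he0 he1
  have hlt : artanh e < (Real.sqrt x - 1 / Real.sqrt x) / 2 := by
    rw [← hsinh, ht]; exact Real.self_lt_sinh_iff.mpr (ht ▸ htpos)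
  -- now compute √(1-e²) * ((√x - 1/√x)/2) = e
  set s : ℝ := Real.sqrt (1 + e) with hs
  set r : ℝ := Real.sqrt (1 - e) with hr
  have hspos : 0 < s := Real.sqrt_pos.mpr (by linarith)
  have hrpos : 0 < r := Real.sqrt_pos.mpr (by linarith)
  have hs2 : s ^ 2 = 1 + e := Real.sq_sqrt (by linarith)
  have hr2 : r ^ 2 = 1 - e := Real.sq_sqrt (by linarith)
  have hsqx : Real.sqrt x = s / r := by
    rw [hxdef, Real.sqrt_div (by linarith)]
  have hsq : Real.sqrt (1 - e ^ 2) = s * r := by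
    rw [show (1 - e ^ 2 : ℝ) = (1 + e) * (1 - e) by ring, Real.sqrt_mul (by linarith)]
  have hval : Real.sqrt (1 - e ^ 2) * ((Real.sqrt x - 1 / Real.sqrt x) / 2) = e := by
    rw [hsq, hsqx]
    field_simp
    linear_combination hs2 - hr2
  have hpos : 0 < Real.sqrt (1 - e ^ 2) := Real.sqrt_pos.mpr (by nlinarith)
  calc Real.sqrt (1 - e ^ 2) * artanh e
      < Real.sqrt (1 - e ^ 2) * ((Real.sqrt x - 1 / Real.sqrt x) / 2) := by
        exact mul_lt_mul_of_pos_left hlt hpos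
    _ = e := hval

/-- for every a ∈ (0,1) the softness satisfies 1/√2 < σ(a) < 1. -/
theorem softness_mem_Ioo :
    ∀ a ∈ Set.Ioo (0 : ℝ) 1, 1 / Real.sqrt 2 < softness a ∧ softness a < 1 := by
  rintro a ⟨ha0, ha1⟩
  set e : ℝ := ecc a with he
  have h1a : 0 < 1 - a ^ 2 := by nlinarith
  have he0 : 0 < e := Real.sqrt_pos.mpr h1a
  have he1 : e < 1 := by
    rw [he, show (1 : ℝ) = Real.sqrt 1 by simp]
    exact Real.sqrt_lt_sqrt (le_of_lt h1a) (by nlinarith)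
  have hart : 0 < artanh e := artanh_pos he0 he1
  have hD : 0 < e + a * artanh e := by positivity
  -- a = √(1-e²)
  have hae : a = Real.sqrt (1 - e ^ 2) := by
    rw [he, ecc, Real.sq_sqrt (le_of_lt h1a)]
    rw [show (1 - (1 - a ^ 2) : ℝ) = a ^ 2 by ring, Real.sqrt_sq (le_of_lt ha0)]
  have hkey : a * artanh e < e := by
    rw [hae]; exact key he0 he1
  constructor
  · have h12 : (1 / 2 : ℝ) < e / (e + a * artanh e) := by
      rw [div_lt_div_iff₀ (by norm_num) hD]; linarith
    have : Real.sqrt (1 / 2) < Real.sqrt (e / (e + a * artanh e)) :=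
      Real.sqrt_lt_sqrt (by norm_num) h12
    calc (1 : ℝ) / Real.sqrt 2 = Real.sqrt (1 / 2) := by
          rw [Real.sqrt_div (by norm_num), Real.sqrt_one]
      _ < softness a := this
  · have hlt1 : e / (e + a * artanh e) < 1 := by
      rw [div_lt_one hD]; nlinarith
    have : Real.sqrt (e / (e + a * artanh e)) < Real.sqrt 1 :=
      Real.sqrt_lt_sqrt (by positivity) hlt1
    simpa [softness, ← he] using this
end
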